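/- Fix X = 3/2, k_1 = 8, k_2 = 1, δ = 1/6, ξ = 1, k_7 = 8, and let σ, τ be real numbers such that the quantities k_3 = (324 + 4σ + 36τ)/7, β = (132 + 5σ + 24τ)/(11232 + 120σ + 1248τ) and k_4 = (384 + 5σ + 45τ)(1536 + 20σ + 180τ)/(21(1404 + 15σ + 156τ)) are defined and positive (denominators positive). Then for the planar system with these parameters the point (x_1, x_2) = (1, 1/4) is a steady state, and the Jacobian J(1, 1/4) has trace τ and determinant σ. -/

import Mathlib

/-- Right-hand side `F₁` of the reduced two-dimensional model for wild-type Lck. -/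
noncomputable def F1 (k1 k2 k3 k4 k7 β δ ξ X : ℝ) (x1 x2 : ℝ) : ℝ :=
  -(k2 * x1) + k1 * x2 + k4 * ξ * (X - x1 - x2) / (β * (ξ + 1) + ξ * (X - x1 - x2))
    - k3 * x1 * ((X - x1 - x2) + δ * x1)

/-- Right-hand side `F₂` of the reduced two-dimensional model for wild-type Lck. -/
noncomputable def F2 (k1 k2 k3 k4 k7 β δ ξ X : ℝ) (x1 x2 : ℝ) : ℝ :=
  k2 * x1 - k1 * x2 + (k7 / (ξ + 1)) * (X - x1 - x2)

/-- Jacobian matrix of `(F₁, F₂)` with respect to `(x₁, x₂)`, formed from the four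
partial derivatives. -/
noncomputable def Jac (k1 k2 k3 k4 k7 β δ ξ X : ℝ) (x1 x2 : ℝ) : Matrix (Fin 2) (Fin 2) ℝ :=
  !![deriv (fun s => F1 k1 k2 k3 k4 k7 β δ ξ X s x2) x1,
     deriv (fun s => F1 k1 k2 k3 k4 k7 β δ ξ X x1 s) x2;
     deriv (fun s => F2 k1 k2 k3 k4 k7 β δ ξ X s x2) x1,
     deriv (fun s => F2 k1 k2 k3 k4 k7 β δ ξ X x1 s) x2]

lemma hF1x1 (k1 k2 k3 k4 k7 β δ ξ X x1 x2 : ℝ)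
    (hD : β * (ξ + 1) + ξ * (X - x1 - x2) ≠ 0) :
    HasDerivAt (fun s => F1 k1 k2 k3 k4 k7 β δ ξ X s x2)
      (-k2 - k4 * ξ * (β * (ξ + 1)) / (β * (ξ + 1) + ξ * (X - x1 - x2)) ^ 2
        - k3 * ((X - x1 - x2) + δ * x1) - k3 * x1 * (δ - 1)) x1 := by
  have h1 : HasDerivAt (fun s : ℝ => X - s - x2) (-1) x1 := by
    simpa using ((hasDerivAt_id x1).const_sub X).sub_const x2
  have h2 : HasDerivAt (fun s : ℝ => k4 * ξ * (X - s - x2)) (k4 * ξ * (-1)) x1 :=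
    h1.const_mul _
  have h3 : HasDerivAt (fun s : ℝ => β * (ξ + 1) + ξ * (X - s - x2)) (ξ * (-1)) x1 :=
    (h1.const_mul ξ).const_add _
  have hq := h2.div h3 hD
  have hlin : HasDerivAt (fun s : ℝ => -(k2 * s) + k1 * x2) (-k2 + 0) x1 := by
    simpa using (((hasDerivAt_id x1).const_mul k2).neg).add_const (k1 * x2)
  have hcub : HasDerivAt (fun s : ℝ => k3 * s * ((X - s - x2) + δ * s))
      ((k3 * 1) * ((X - x1 - x2) + δ * x1) + (k3 * x1) * (-1 + δ * 1)) x1 := by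
    have ha : HasDerivAt (fun s : ℝ => k3 * s) (k3 * 1) x1 := (hasDerivAt_id x1).const_mul k3
    have hb : HasDerivAt (fun s : ℝ => (X - s - x2) + δ * s) (-1 + δ * 1) x1 :=
      h1.add ((hasDerivAt_id x1).const_mul δ)
    exact ha.mul hb
  have H := (hlin.add hq).sub hcub
  refine H.congr_deriv ?_
  field_simp
  ring

lemma hF1x2 (k1 k2 k3 k4 k7 β δ ξ X x1 x2 : ℝ)
    (hD : β * (ξ + 1) + ξ * (X - x1 - x2) ≠ 0) :
    HasDerivAt (fun s => F1 k1 k2 k3 k4 k7 β δ ξ X x1 s)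
      (k1 - k4 * ξ * (β * (ξ + 1)) / (β * (ξ + 1) + ξ * (X - x1 - x2)) ^ 2
        + k3 * x1) x2 := by
  have h1 : HasDerivAt (fun s : ℝ => X - x1 - s) (-1) x2 := by
    simpa using (hasDerivAt_id x2).const_sub (X - x1)
  have h2 : HasDerivAt (fun s : ℝ => k4 * ξ * (X - x1 - s)) (k4 * ξ * (-1)) x2 :=
    h1.const_mul _
  have h3 : HasDerivAt (fun s : ℝ => β * (ξ + 1) + ξ * (X - x1 - s)) (ξ * (-1)) x2 :=
    (h1.const_mul ξ).const_add _
  have hq := h2.div h3 hD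
  have hlin : HasDerivAt (fun s : ℝ => -(k2 * x1) + k1 * s) (k1 * 1) x2 := by
    simpa using ((hasDerivAt_id x2).const_mul k1).const_add (-(k2 * x1))
  have hcub : HasDerivAt (fun s : ℝ => k3 * x1 * ((X - x1 - s) + δ * x1))
      (k3 * x1 * (-1)) x2 := (h1.add_const (δ * x1)).const_mul _
  have H := (hlin.add hq).sub hcub
  refine H.congr_deriv ?_
  field_simp
  ring

lemma hF2x1 (k1 k2 k3 k4 k7 β δ ξ X x1 x2 : ℝ) :
    HasDerivAt (fun s => F2 k1 k2 k3 k4 k7 β δ ξ X s x2)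
      (k2 - k7 / (ξ + 1)) x1 := by
  have h1 : HasDerivAt (fun s : ℝ => X - s - x2) (-1) x1 := by
    simpa using ((hasDerivAt_id x1).const_sub X).sub_const x2
  have H := (((hasDerivAt_id x1).const_mul k2).sub_const (k1 * x2)).add
    (h1.const_mul (k7 / (ξ + 1)))
  refine H.congr_deriv ?_
  ring

lemma hF2x2 (k1 k2 k3 k4 k7 β δ ξ X x1 x2 : ℝ) :
    HasDerivAt (fun s => F2 k1 k2 k3 k4 k7 β δ ξ X x1 s)
      (-k1 - k7 / (ξ + 1)) x2 := by
  have h1 : HasDerivAt (fun s : ℝ => X - x1 - s) (-1) x2 := by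
    simpa using (hasDerivAt_id x2).const_sub (X - x1)
  have H := (((hasDerivAt_id x2).const_mul k1).const_sub (k2 * x1)).add
    (h1.const_mul (k7 / (ξ + 1)))
  refine H.congr_deriv ?_
  ring

set_option maxHeartbeats 1600000 in
/-- The explicit two-parameter family of steady states extending the Bogdanov–Takens point:
with `X = 3/2`, `k₁ = 8`, `k₂ = 1`, `δ = 1/6`, `ξ = 1`, `k₇ = 8` and
`k₃ = (324 + 4σ + 36τ)/7`, `β = (132 + 5σ + 24τ)/(11232 + 120σ + 1248τ)`,
`k₄ = (384 + 5σ + 45τ)(1536 + 20σ + 180τ)/(21(1404 + 15σ + 156τ))` (denominators positive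
and `k₃, β, k₄` positive), the point `(1, 1/4)` is a steady state and the Jacobian there
has trace `τ` and determinant `σ`. -/
theorem lck_two_parameter_family (σ τ : ℝ)
    (hden1 : 0 < 11232 + 120 * σ + 1248 * τ)
    (hden2 : 0 < 1404 + 15 * σ + 156 * τ)
    (hk3 : 0 < (324 + 4 * σ + 36 * τ) / 7)
    (hβ : 0 < (132 + 5 * σ + 24 * τ) / (11232 + 120 * σ + 1248 * τ))
    (hk4 : 0 < (384 + 5 * σ + 45 * τ) * (1536 + 20 * σ + 180 * τ)
        / (21 * (1404 + 15 * σ + 156 * τ))) :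
    F1 8 1 ((324 + 4 * σ + 36 * τ) / 7)
        ((384 + 5 * σ + 45 * τ) * (1536 + 20 * σ + 180 * τ)
          / (21 * (1404 + 15 * σ + 156 * τ)))
        8 ((132 + 5 * σ + 24 * τ) / (11232 + 120 * σ + 1248 * τ)) (1/6) 1 (3/2) 1 (1/4) = 0 ∧
    F2 8 1 ((324 + 4 * σ + 36 * τ) / 7)
        ((384 + 5 * σ + 45 * τ) * (1536 + 20 * σ + 180 * τ)
          / (21 * (1404 + 15 * σ + 156 * τ)))
        8 ((132 + 5 * σ + 24 * τ) / (11232 + 120 * σ + 1248 * τ)) (1/6) 1 (3/2) 1 (1/4) = 0 ∧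
    Matrix.trace
      (Jac 8 1 ((324 + 4 * σ + 36 * τ) / 7)
        ((384 + 5 * σ + 45 * τ) * (1536 + 20 * σ + 180 * τ)
          / (21 * (1404 + 15 * σ + 156 * τ)))
        8 ((132 + 5 * σ + 24 * τ) / (11232 + 120 * σ + 1248 * τ)) (1/6) 1 (3/2) 1 (1/4)) = τ ∧
    (Jac 8 1 ((324 + 4 * σ + 36 * τ) / 7)
        ((384 + 5 * σ + 45 * τ) * (1536 + 20 * σ + 180 * τ)
          / (21 * (1404 + 15 * σ + 156 * τ)))
        8 ((132 + 5 * σ + 24 * τ) / (11232 + 120 * σ + 1248 * τ)) (1/6) 1 (3/2) 1 (1/4)).det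
      = σ := by

  set b : ℝ := (132 + 5 * σ + 24 * τ) / (11232 + 120 * σ + 1248 * τ) with hbdef
  set c3 : ℝ := (324 + 4 * σ + 36 * τ) / 7 with hc3def
  set c4 : ℝ := (384 + 5 * σ + 45 * τ) * (1536 + 20 * σ + 180 * τ)
      / (21 * (1404 + 15 * σ + 156 * τ)) with hc4def
  have hN : (0:ℝ) < 132 + 5 * σ + 24 * τ := by
    rcases div_pos_iff.mp hβ with ⟨h1, _⟩ | ⟨_, h2⟩
    · exact h1
    · linarith
  have hE : (0:ℝ) < 12288 + 160 * σ + 1440 * τ := by linarith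
  have hDpos : (0:ℝ) < b * ((1:ℝ) + 1) + 1 * ((3:ℝ)/2 - 1 - 1/4) := by
    have : (0:ℝ) < b := hβ
    linarith
  have hD : b * ((1:ℝ) + 1) + 1 * ((3:ℝ)/2 - 1 - 1/4) ≠ 0 := ne_of_gt hDpos
  have h1' : (11232 + σ * 120 + τ * 1248 : ℝ) ≠ 0 := by nlinarith
  have h2' : (1404 + σ * 15 + τ * 156 : ℝ) ≠ 0 := by nlinarith
  have hE' : (12288 + σ * 160 + τ * 1440 : ℝ) ≠ 0 := by nlinarith
  have hb2 : b * ((1:ℝ) + 1) + 1 * ((3:ℝ)/2 - 1 - 1/4)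
      = (12288 + 160 * σ + 1440 * τ) / (4 * (11232 + 120 * σ + 1248 * τ)) := by
    rw [hbdef]
    field_simp [hden1.ne', h1']
    ring
  refine ⟨?_, ?_, ?_, ?_⟩
  · show F1 8 1 c3 c4 8 b (1/6) 1 (3/2) 1 (1/4) = 0
    rw [F1, hb2, hc3def, hc4def]
    field_simp [hden1.ne', hden2.ne', hE.ne', h1', h2', hE']
    ring
  · show F2 8 1 c3 c4 8 b (1/6) 1 (3/2) 1 (1/4) = 0
    rw [F2]
    norm_num
  · show Matrix.trace (Jac 8 1 c3 c4 8 b (1/6) 1 (3/2) 1 (1/4)) = τ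
    rw [Jac, (hF1x1 8 1 c3 c4 8 b (1/6) 1 (3/2) 1 (1/4) hD).deriv,
      (hF2x2 8 1 c3 c4 8 b (1/6) 1 (3/2) 1 (1/4)).deriv, Matrix.trace_fin_two_of]
    rw [hb2, hbdef, hc3def, hc4def]
    field_simp [hden1.ne', hden2.ne', hE.ne', h1', h2', hE']
    ring
  · show (Jac 8 1 c3 c4 8 b (1/6) 1 (3/2) 1 (1/4)).det = σ
    rw [Jac, (hF1x1 8 1 c3 c4 8 b (1/6) 1 (3/2) 1 (1/4) hD).deriv,
      (hF1x2 8 1 c3 c4 8 b (1/6) 1 (3/2) 1 (1/4) hD).deriv,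
      (hF2x1 8 1 c3 c4 8 b (1/6) 1 (3/2) 1 (1/4)).deriv,
      (hF2x2 8 1 c3 c4 8 b (1/6) 1 (3/2) 1 (1/4)).deriv, Matrix.det_fin_two_of]
    rw [hb2, hbdef, hc3def, hc4def]
    field_simp [hden1.ne', hden2.ne', hE.ne', h1', h2', hE']
    ring
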